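/- If the market (f, S) is viable, then there exists a strictly positive linear functional Φ : C(Ω, ℝ) → ℝ (i.e., Φ(X) > 0 whenever X ≥ 0 pointwise and X ≠ 0) such that Φ(π·S) = π·f for every portfolio π ∈ ℝ^{D+1}. -/

import Mathlib

set_option maxHeartbeats 1000000
set_option linter.unusedSectionVars false


open MeasureTheory Filter Topology

variable {Ω : Type*}

section Defs

variable [TopologicalSpace Ω] [MeasurableSpace Ω]

/-- A portfolio `π` is an arbitrage for the market `(f, S)`:
nonpositive cost, nonnegative payoff everywhere, strictly positive payoff somewhere. -/
def IsArbitrage {D : ℕ} (f : Fin (D + 1) → ℝ) (S : Fin (D + 1) → C(Ω, ℝ))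
    (π : Fin (D + 1) → ℝ) : Prop :=
  (∑ d, π d * f d) ≤ 0 ∧ (∀ ω : Ω, 0 ≤ ∑ d, π d * S d ω) ∧ (∃ ω : Ω, 0 < ∑ d, π d * S d ω)

/-- The market `(f, S)` is arbitrage-free. -/
def ArbitrageFree {D : ℕ} (f : Fin (D + 1) → ℝ) (S : Fin (D + 1) → C(Ω, ℝ)) : Prop :=
  ¬ ∃ π : Fin (D + 1) → ℝ, IsArbitrage f S π

/-- A measure has full support: every nonempty open set has positive measure. -/
def HasFullSupport (P : Measure Ω) : Prop :=
  ∀ U : Set Ω, IsOpen U → U.Nonempty → 0 < P U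

/-- A martingale measure for the market `(f, S)`: a Borel probability measure under which
every asset payoff is integrable with expectation equal to its time-0 price. -/
def IsMartingaleMeasure {D : ℕ} (f : Fin (D + 1) → ℝ) (S : Fin (D + 1) → C(Ω, ℝ))
    (P : Measure Ω) : Prop :=
  IsProbabilityMeasure P ∧ ∀ d, Integrable (S d) P ∧ (∫ ω, S d ω ∂P) = f d

/-- A portfolio `π` is a superhedge for the claim `H`. -/
def IsSuperhedge {D : ℕ} (S : Fin (D + 1) → C(Ω, ℝ)) (H : C(Ω, ℝ))
    (π : Fin (D + 1) → ℝ) : Prop :=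
  ∀ ω : Ω, H ω ≤ ∑ d, π d * S d ω

/-- A portfolio `π` is a subhedge for the claim `H`. -/
def IsSubhedge {D : ℕ} (S : Fin (D + 1) → C(Ω, ℝ)) (H : C(Ω, ℝ))
    (π : Fin (D + 1) → ℝ) : Prop :=
  ∀ ω : Ω, (∑ d, π d * S d ω) ≤ H ω

end Defs

/-- The market `(f, S)` is viable: there is a complete, transitive, continuous and strictly
monotone preference relation on `C(Ω, ℝ)` for which no trade is optimal at budget `0`. -/
def Viable [TopologicalSpace Ω] {D : ℕ} (f : Fin (D + 1) → ℝ)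
    (S : Fin (D + 1) → C(Ω, ℝ)) : Prop :=
  ∃ R : C(Ω, ℝ) → C(Ω, ℝ) → Prop,
    -- complete
    (∀ X Y, R X Y ∨ R Y X) ∧
    -- transitive
    (∀ X Y Z, R X Y → R Y Z → R X Z) ∧
    -- continuous: better-than and worse-than sets are closed
    (∀ X, IsClosed {Z | R Z X}) ∧
    (∀ X, IsClosed {Z | R X Z}) ∧
    -- strictly monotone
    (∀ (Z X : C(Ω, ℝ)), (∀ ω, 0 ≤ X ω) → X ≠ 0 → (R (Z + X) Z ∧ ¬ R Z (Z + X))) ∧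
    -- no trade is optimal at budget 0
    (∀ π : Fin (D + 1) → ℝ, (∑ d, π d * f d) ≤ 0 → R 0 (∑ d, π d • S d))

section Work
variable [MetricSpace Ω] [Nonempty Ω] [CompactSpace Ω] {D : ℕ}

/-- payoff linear map -/
def Tmap (S : Fin (D + 1) → C(Ω, ℝ)) : (Fin (D + 1) → ℝ) →ₗ[ℝ] C(Ω, ℝ) where
  toFun π := ∑ d, π d • S d
  map_add' π σ := by simp [add_smul, Finset.sum_add_distrib]
  map_smul' a π := by simp [smul_smul, Finset.smul_sum]

/-- cost linear map -/
def Fmap (f : Fin (D + 1) → ℝ) : (Fin (D + 1) → ℝ) →ₗ[ℝ] ℝ where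
  toFun π := ∑ d, π d * f d
  map_add' π σ := by simp [add_mul, Finset.sum_add_distrib]
  map_smul' a π := by simp [Finset.mul_sum, mul_assoc]

lemma Tmap_apply (S : Fin (D + 1) → C(Ω, ℝ)) (π : Fin (D + 1) → ℝ) (ω : Ω) :
    Tmap S π ω = ∑ d, π d * S d ω := by
  simp [Tmap]

lemma Tmap_def (S : Fin (D + 1) → C(Ω, ℝ)) (π : Fin (D + 1) → ℝ) :
    Tmap S π = ∑ d, π d • S d := rfl

lemma Fmap_def (f : Fin (D + 1) → ℝ) (π : Fin (D + 1) → ℝ) :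
    Fmap f π = ∑ d, π d * f d := rfl

lemma e0_pay (S : Fin (D + 1) → C(Ω, ℝ)) (hS0 : ∀ ω, S 0 ω = 1) (a : ℝ) (ω : Ω) :
    Tmap S (fun d => if d = 0 then a else 0) ω = a := by
  rw [Tmap_apply]
  rw [Finset.sum_eq_single 0]
  · simp [hS0]
  · intro b _ hb; simp [hb]
  · simp

lemma e0_cost (f : Fin (D + 1) → ℝ) (hf0 : f 0 = 1) (a : ℝ) :
    Fmap f (fun d => if d = 0 then a else 0) = a := by
  rw [Fmap_def]
  rw [Finset.sum_eq_single 0]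
  · simp [hf0]
  · intro b _ hb; simp [hb]
  · simp

variable {f : Fin (D + 1) → ℝ} {S : Fin (D + 1) → C(Ω, ℝ)}

lemma keyA (hS0 : ∀ ω, S 0 ω = 1) (hf0 : f 0 = 1) (hv : Viable f S) :
    ∀ π : Fin (D + 1) → ℝ, (∀ ω, 0 ≤ Tmap S π ω) → 0 ≤ Fmap f π := by
  obtain ⟨R, _, _, _, _, hmono, hopt⟩ := hv
  intro π hpos
  by_contra h
  push_neg at h
  set ε := -(Fmap f π) with hε
  have hε0 : 0 < ε := by simp [hε]; linarith
  set π' : Fin (D + 1) → ℝ := π + (fun d => if d = 0 then ε else 0) with hπ'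
  have hcost : Fmap f π' = 0 := by
    rw [hπ', map_add, e0_cost f hf0]; simp [hε]
  have hpay : ∀ ω, Tmap S π' ω = Tmap S π ω + ε := by
    intro ω
    rw [hπ', map_add, ContinuousMap.add_apply, e0_pay S hS0]
  have hX0 : ∀ ω, 0 ≤ Tmap S π' ω := fun ω => by
    rw [hpay ω]; have := hpos ω; linarith
  have hXne : Tmap S π' ≠ 0 := by
    intro hc
    have : Tmap S π' (Classical.arbitrary Ω) = 0 := by rw [hc]; rfl
    have := hpay (Classical.arbitrary Ω)
    have := hpos (Classical.arbitrary Ω)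
    linarith
  have hR : R 0 (∑ d, π' d • S d) := hopt π' (le_of_eq hcost)
  have hR' : ¬ R 0 (0 + Tmap S π') := (hmono 0 (Tmap S π') hX0 hXne).2
  rw [zero_add] at hR'
  exact hR' hR

lemma keyB (hS0 : ∀ ω, S 0 ω = 1) (hf0 : f 0 = 1) (hv : Viable f S) :
    ∀ π : Fin (D + 1) → ℝ, (∀ ω, 0 ≤ Tmap S π ω) → (∃ ω, 0 < Tmap S π ω) →
      0 < Fmap f π := by
  intro π hpos ⟨ω₀, hω₀⟩
  obtain ⟨R, _, _, _, _, hmono, hopt⟩ := hv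
  by_contra h
  push_neg at h
  have hXne : Tmap S π ≠ 0 := by
    intro hc
    rw [hc] at hω₀; simp at hω₀
  have hR : R 0 (∑ d, π d • S d) := hopt π h
  have hR' : ¬ R 0 (0 + Tmap S π) := (hmono 0 (Tmap S π) hpos hXne).2
  rw [zero_add] at hR'
  exact hR' hR

lemma keyC (hS0 : ∀ ω, S 0 ω = 1) (hf0 : f 0 = 1) (hv : Viable f S) :
    ∃ m : ℝ, 0 < m ∧ ∀ π : Fin (D + 1) → ℝ,
      (∀ ω, 0 ≤ Tmap S π ω) → m * ‖Tmap S π‖ ≤ Fmap f π := by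
  classical
  set T := Tmap S
  set F := Fmap f
  have hker : LinearMap.ker T ≤ LinearMap.ker F := by
    intro π hπ
    rw [LinearMap.mem_ker] at hπ ⊢
    have h0 : ∀ ω, T π ω = 0 := fun ω => by rw [hπ]; rfl
    have h1 : 0 ≤ F π := keyA hS0 hf0 hv π (fun ω => (h0 ω).ge)
    have h2 : 0 ≤ F (-π) := keyA hS0 hf0 hv (-π) (fun ω => by
      rw [map_neg, ContinuousMap.neg_apply, h0]; simp)
    rw [map_neg] at h2
    linarith
  set ℓ : ↥(LinearMap.range T) →ₗ[ℝ] ℝ :=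
    ((LinearMap.ker T).liftQ F hker).comp (T.quotKerEquivRange.symm).toLinearMap with hℓdef
  have hℓ : ∀ (π : Fin (D + 1) → ℝ) (h : T π ∈ LinearMap.range T), ℓ ⟨T π, h⟩ = F π := by
    intro π h
    have h1 : T.quotKerEquivRange (Submodule.Quotient.mk π) = ⟨T π, h⟩ := by
      apply Subtype.ext
      exact T.quotKerEquivRange_apply_mk π
    have h2 : (T.quotKerEquivRange.symm) ⟨T π, h⟩ = Submodule.Quotient.mk π := by
      rw [LinearEquiv.symm_apply_eq, h1]
    rw [hℓdef]
    simp only [LinearMap.comp_apply, LinearEquiv.coe_toLinearMap, h2, Submodule.liftQ_apply]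
  haveI : FiniteDimensional ℝ ↥(LinearMap.range T) := inferInstance
  have hℓcont : Continuous ℓ := ℓ.continuous_of_finiteDimensional
  set K : Set ↥(LinearMap.range T) :=
    {X | (∀ ω, 0 ≤ (X : C(Ω, ℝ)) ω) ∧ ‖X‖ = 1} with hK
  have hKc : IsCompact K := by
    apply Metric.isCompact_of_isClosed_isBounded
    · have : K = (⋂ ω, {X : ↥(LinearMap.range T) | 0 ≤ (X : C(Ω, ℝ)) ω}) ∩
          {X | ‖X‖ = 1} := by
        ext X; simp [hK, Set.mem_iInter]
      rw [this]
      exact (isClosed_iInter fun ω => isClosed_le continuous_const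
        ((continuous_eval_const ω).comp continuous_subtype_val)).inter
        (isClosed_eq continuous_norm continuous_const)
    · apply Bornology.IsBounded.subset (Metric.isBounded_sphere (x := 0) (r := 1))
      intro X hX
      rw [mem_sphere_zero_iff_norm]
      exact hX.2
  -- the normalized element helper
  have hmem : ∀ π : Fin (D + 1) → ℝ, (∀ ω, 0 ≤ T π ω) → T π ≠ 0 →
      ∃ π' : Fin (D + 1) → ℝ, (⟨T π', LinearMap.mem_range_self T π'⟩ : ↥(LinearMap.range T)) ∈ K ∧
        F π' = ‖T π‖⁻¹ * F π ∧ ‖T π‖ * F π' = F π := by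
    intro π hpos hne
    have hr : 0 < ‖T π‖ := norm_pos_iff.mpr hne
    set r := ‖T π‖ with hrdef
    refine ⟨r⁻¹ • π, ?_, ?_, ?_⟩
    · constructor
      · intro ω
        show 0 ≤ T (r⁻¹ • π) ω
        rw [T.map_smul, ContinuousMap.smul_apply, smul_eq_mul]
        exact mul_nonneg (by positivity) (hpos ω)
      · show ‖T (r⁻¹ • π)‖ = 1
        rw [T.map_smul, norm_smul, norm_inv, norm_norm, ← hrdef]
        field_simp
    · rw [F.map_smul, smul_eq_mul]
    · rw [F.map_smul, smul_eq_mul, ← mul_assoc]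
      field_simp
  rcases K.eq_empty_or_nonempty with hKe | hKne
  · refine ⟨1, one_pos, fun π hpos => ?_⟩
    have h0 : T π = 0 := by
      by_contra hne
      obtain ⟨π', hπ'K, _, _⟩ := hmem π hpos hne
      rw [hKe] at hπ'K
      exact hπ'K
    rw [h0, norm_zero, one_mul]
    exact keyA hS0 hf0 hv π hpos
  · obtain ⟨x₀, hx₀K, hx₀min⟩ := hKc.exists_isMinOn hKne hℓcont.continuousOn
    obtain ⟨ρ, hρ⟩ := x₀.2
    set m := ℓ x₀ with hm
    have hρpos : ∀ ω, 0 ≤ T ρ ω := by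
      intro ω
      have := hx₀K.1 ω
      rwa [← hρ] at this
    have hρnorm : ‖T ρ‖ = 1 := by
      have := hx₀K.2
      rwa [show ‖x₀‖ = ‖(x₀ : C(Ω,ℝ))‖ from rfl, ← hρ] at this
    have hρex : ∃ ω, 0 < T ρ ω := by
      by_contra hc
      push_neg at hc
      have : T ρ = 0 := by
        ext ω
        exact le_antisymm (hc ω) (hρpos ω)
      rw [this, norm_zero] at hρnorm
      norm_num at hρnorm
    have hmpos : 0 < m := by
      have : ℓ x₀ = F ρ := by
        have : x₀ = ⟨T ρ, LinearMap.mem_range_self T ρ⟩ := by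
          apply Subtype.ext; exact hρ.symm
        rw [this, hℓ]
      rw [hm, this]
      exact keyB hS0 hf0 hv ρ hρpos hρex
    refine ⟨m, hmpos, fun π hpos => ?_⟩
    by_cases hne : T π = 0
    · rw [hne, norm_zero, mul_zero]
      exact keyA hS0 hf0 hv π hpos
    · obtain ⟨π', hπ'K, _, hFπ'⟩ := hmem π hpos hne
      have hle : m ≤ ℓ ⟨T π', LinearMap.mem_range_self T π'⟩ := hx₀min hπ'K
      rw [hℓ] at hle
      have hr : 0 < ‖T π‖ := norm_pos_iff.mpr hne
      calc m * ‖T π‖ ≤ F π' * ‖T π‖ := by nlinarith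
        _ = F π := by rw [mul_comm]; exact hFπ'

lemma mainPhi (hS0 : ∀ ω, S 0 ω = 1) (hf0 : f 0 = 1) (hv : Viable f S)
    (φ : C(Ω, ℝ)) (hφ0 : ∀ ω, 0 ≤ φ ω) (hφ : φ ≠ 0) :
    ∃ Φ : C(Ω, ℝ) →ₗ[ℝ] ℝ,
      (∀ X : C(Ω, ℝ), (∀ ω, 0 ≤ X ω) → 0 ≤ Φ X) ∧
      (∀ π : Fin (D + 1) → ℝ, Φ (∑ d, π d • S d) = ∑ d, π d * f d) ∧
      0 < Φ φ := by
  classical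
  obtain ⟨m, hm, hmC⟩ := keyC hS0 hf0 hv
  set T := Tmap S
  set F := Fmap f
  -- the superhedging price of φ
  set A : Set ℝ := {x | ∃ π : Fin (D + 1) → ℝ, (∀ ω, φ ω ≤ T π ω) ∧ x = F π} with hA
  have hφle : ∀ ω, φ ω ≤ ‖φ‖ := fun ω =>
    (le_abs_self _).trans (φ.norm_coe_le_norm ω)
  have hAne : A.Nonempty := by
    refine ⟨‖φ‖, fun d => if d = 0 then ‖φ‖ else 0, fun ω => ?_, ?_⟩
    · rw [e0_pay S hS0]; exact hφle ω
    · rw [e0_cost f hf0]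
  have hAlb : ∀ x ∈ A, m * ‖φ‖ ≤ x := by
    rintro x ⟨π, hπ, rfl⟩
    have hpos : ∀ ω, 0 ≤ T π ω := fun ω => (hφ0 ω).trans (hπ ω)
    have h1 : ‖φ‖ ≤ ‖T π‖ := by
      rw [ContinuousMap.norm_le _ (norm_nonneg _)]
      intro ω
      rw [Real.norm_eq_abs, abs_of_nonneg (hφ0 ω)]
      exact (hπ ω).trans ((le_abs_self _).trans ((T π).norm_coe_le_norm ω))
    calc m * ‖φ‖ ≤ m * ‖T π‖ := by nlinarith
      _ ≤ F π := hmC π hpos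
  have hAbdd : BddBelow A := ⟨m * ‖φ‖, hAlb⟩
  set c := sInf A with hc
  have hcge : m * ‖φ‖ ≤ c := le_csInf hAne hAlb
  have hφn : 0 < ‖φ‖ := norm_pos_iff.mpr hφ
  have hcpos : 0 < c := lt_of_lt_of_le (by positivity) hcge
  -- key consistency lemma
  have keyD : ∀ (π : Fin (D + 1) → ℝ) (t : ℝ),
      (∀ ω, 0 ≤ T π ω + t * φ ω) → 0 ≤ F π + t * c := by
    intro π t hh
    rcases lt_trichotomy t 0 with ht | ht | ht
    · have hmem : F ((-t)⁻¹ • π) ∈ A := by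
        refine ⟨(-t)⁻¹ • π, fun ω => ?_, rfl⟩
        rw [T.map_smul, ContinuousMap.smul_apply, smul_eq_mul]
        have h1 : 0 < -t := by linarith
        have := hh ω
        rw [← div_eq_inv_mul, le_div_iff₀ h1]
        nlinarith
      have h3 : c ≤ F ((-t)⁻¹ • π) := csInf_le hAbdd hmem
      rw [F.map_smul, smul_eq_mul] at h3
      have h1 : 0 < -t := by linarith
      have h4 : (-t) * c ≤ F π := by
        have h5 := mul_le_mul_of_nonneg_left h3 (le_of_lt h1)
        rwa [← mul_assoc, mul_inv_cancel₀ (ne_of_gt h1), one_mul] at h5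
      linarith
    · subst ht; simp only [zero_mul, add_zero] at hh ⊢
      exact keyA hS0 hf0 hv π hh
    · have h5 : -(F π) / t ≤ c := by
        apply le_csInf hAne
        rintro x ⟨σ, hσ, rfl⟩
        have hρ : ∀ ω, 0 ≤ T (σ + t⁻¹ • π) ω := by
          intro ω
          rw [T.map_add, T.map_smul, ContinuousMap.add_apply,
            ContinuousMap.smul_apply, smul_eq_mul]
          have h6 := hh ω
          have h7 : 0 ≤ t⁻¹ * (T π ω + t * φ ω) := by positivity
          have h8 : t⁻¹ * (T π ω + t * φ ω) = t⁻¹ * T π ω + φ ω := by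
            rw [mul_add, ← mul_assoc, inv_mul_cancel₀ (ne_of_gt ht), one_mul]
          have := hσ ω
          nlinarith [hφ0 ω]
        have h9 := keyA hS0 hf0 hv _ hρ
        rw [F.map_add, F.map_smul, smul_eq_mul] at h9
        have h11 : 0 ≤ t * (F σ + t⁻¹ * F π) := mul_nonneg (le_of_lt ht) h9
        have h12 : t * (F σ + t⁻¹ * F π) = t * F σ + F π := by
          rw [mul_add, ← mul_assoc, mul_inv_cancel₀ (ne_of_gt ht), one_mul]
        rw [div_le_iff₀ ht]
        nlinarith
      rw [div_le_iff₀ ht] at h5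
      nlinarith
  -- the sublinear functional
  set B : C(Ω, ℝ) → Set ℝ := fun X =>
    {x | ∃ (π : Fin (D + 1) → ℝ) (t : ℝ), (∀ ω, X ω ≤ T π ω + t * φ ω) ∧ x = F π + t * c}
    with hB
  set p : C(Ω, ℝ) → ℝ := fun X => sInf (B X) with hp
  have hBne : ∀ X, ‖X‖ ∈ B X := by
    intro X
    refine ⟨fun d => if d = 0 then ‖X‖ else 0, 0, fun ω => ?_, ?_⟩
    · rw [e0_pay S hS0]
      simp only [zero_mul, add_zero]
      exact (le_abs_self _).trans (X.norm_coe_le_norm ω)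
    · rw [e0_cost f hf0]; ring
  have hBlb : ∀ X, ∀ x ∈ B X, -‖X‖ ≤ x := by
    rintro X x ⟨π, t, hh, rfl⟩
    have h1 : ∀ ω, 0 ≤ T (π + fun d => if d = 0 then ‖X‖ else 0) ω + t * φ ω := by
      intro ω
      rw [T.map_add, ContinuousMap.add_apply, e0_pay S hS0]
      have h2 : -‖X‖ ≤ X ω := by
        rw [neg_le]
        exact (neg_le_abs _).trans (X.norm_coe_le_norm ω)
      have := hh ω
      linarith
    have h3 := keyD _ t h1
    rw [F.map_add, e0_cost f hf0] at h3
    linarith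
  have hBbdd : ∀ X, BddBelow (B X) := fun X => ⟨-‖X‖, hBlb X⟩
  have hBneS : ∀ X, (B X).Nonempty := fun X => ⟨‖X‖, hBne X⟩
  -- sublinearity
  have hphom : ∀ a : ℝ, 0 < a → ∀ X, p (a • X) ≤ a * p X := by
    intro a ha X
    have h1 : a⁻¹ * p (a • X) ≤ p X := by
      apply le_csInf (hBneS X)
      rintro x ⟨π, t, hh, rfl⟩
      have hmem : a * (F π + t * c) ∈ B (a • X) := by
        refine ⟨a • π, a * t, fun ω => ?_, ?_⟩
        · rw [T.map_smul, ContinuousMap.smul_apply, ContinuousMap.smul_apply,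
            smul_eq_mul, smul_eq_mul, mul_assoc]
          have := hh ω
          nlinarith
        · rw [F.map_smul, smul_eq_mul]; ring
      have := csInf_le (hBbdd _) hmem
      rw [inv_mul_le_iff₀ ha]
      linarith
    rw [inv_mul_le_iff₀ ha] at h1
    linarith [h1]
  have hphomeq : ∀ a : ℝ, 0 < a → ∀ X, p (a • X) = a * p X := by
    intro a ha X
    refine le_antisymm (hphom a ha X) ?_
    have h2 := hphom a⁻¹ (by positivity) (a • X)
    rw [smul_smul, inv_mul_cancel₀ (ne_of_gt ha), one_smul] at h2
    have h3 : a * p X ≤ a * (a⁻¹ * p (a • X)) := by nlinarith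
    rw [← mul_assoc, mul_inv_cancel₀ (ne_of_gt ha), one_mul] at h3
    exact h3
  have hpadd : ∀ X Y, p (X + Y) ≤ p X + p Y := by
    intro X Y
    have key : ∀ x ∈ B X, ∀ y ∈ B Y, p (X + Y) ≤ x + y := by
      rintro x ⟨π, t, hh1, rfl⟩ y ⟨σ, s, hh2, rfl⟩
      have hmem : (F π + t * c) + (F σ + s * c) ∈ B (X + Y) := by
        refine ⟨π + σ, t + s, fun ω => ?_, ?_⟩
        · rw [T.map_add, ContinuousMap.add_apply, ContinuousMap.add_apply]
          have := hh1 ω; have := hh2 ω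
          nlinarith
        · rw [F.map_add]; ring
      exact csInf_le (hBbdd _) hmem
    have h1 : p (X + Y) - p X ≤ p Y := by
      apply le_csInf (hBneS Y)
      intro y hy
      have h2 : p (X + Y) - y ≤ p X := by
        apply le_csInf (hBneS X)
        intro x hx
        linarith [key x hx y hy]
      linarith
    linarith
  have hp0 : 0 ≤ p 0 := by
    apply le_csInf (hBneS 0)
    rintro x ⟨π, t, hh, rfl⟩
    refine keyD π t fun ω => ?_
    have := hh ω
    simpa using this
  -- Hahn–Banach extension
  obtain ⟨g, -, hg⟩ := exists_extension_of_le_sublinear ⟨⊥, 0⟩ p hphomeq hpadd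
    (by
      rintro ⟨x, hx⟩
      rw [Submodule.mem_bot] at hx
      subst hx
      simpa using hp0)
  have hTle : ∀ π : Fin (D + 1) → ℝ, g (T π) ≤ F π := by
    intro π
    have hmem : F π ∈ B (T π) := ⟨π, 0, fun ω => by simp, by ring⟩
    exact (hg _).trans (csInf_le (hBbdd _) hmem)
  have hprice : ∀ π : Fin (D + 1) → ℝ, g (T π) = F π := by
    intro π
    have h1 := hTle π
    have h2 := hTle (-π)
    rw [T.map_neg, F.map_neg, map_neg] at h2
    linarith
  have hgpos : ∀ X : C(Ω, ℝ), (∀ ω, 0 ≤ X ω) → 0 ≤ g X := by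
    intro X hX
    have hmem : (0 : ℝ) ∈ B (-X) := by
      refine ⟨0, 0, fun ω => ?_, ?_⟩
      · simp only [T.map_zero, ContinuousMap.zero_apply, ContinuousMap.neg_apply,
          zero_mul, add_zero]
        linarith [hX ω]
      · rw [F.map_zero]; ring
    have h1 : g (-X) ≤ 0 := (hg _).trans (csInf_le (hBbdd _) hmem)
    rw [map_neg] at h1
    linarith
  have hgφ : c ≤ g φ := by
    have hmem : (-c : ℝ) ∈ B (-φ) := by
      refine ⟨0, -1, fun ω => ?_, ?_⟩
      · simp [T.map_zero]
      · rw [F.map_zero]; ring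
    have h1 : g (-φ) ≤ -c := (hg _).trans (csInf_le (hBbdd _) hmem)
    rw [map_neg] at h1
    linarith
  exact ⟨g, hgpos, fun π => hprice π, lt_of_lt_of_le hcpos hgφ⟩

lemma Psi_bound (Ψ : C(Ω, ℝ) →ₗ[ℝ] ℝ) (hpos : ∀ X : C(Ω, ℝ), (∀ ω, 0 ≤ X ω) → 0 ≤ Ψ X)
    (h1 : Ψ 1 = 1) (X : C(Ω, ℝ)) : |Ψ X| ≤ ‖X‖ := by
  rw [abs_le]
  constructor
  · have h2 : ∀ ω, 0 ≤ (X + ‖X‖ • (1 : C(Ω, ℝ))) ω := by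
      intro ω
      rw [ContinuousMap.add_apply, ContinuousMap.smul_apply, ContinuousMap.one_apply,
        smul_eq_mul, mul_one]
      have h4 := X.norm_coe_le_norm ω
      rw [Real.norm_eq_abs] at h4
      have h5 := neg_abs_le (X ω)
      linarith
    have h3 := hpos _ h2
    rw [map_add, Ψ.map_smul, h1, smul_eq_mul, mul_one] at h3
    linarith
  · have h2 : ∀ ω, 0 ≤ (‖X‖ • (1 : C(Ω, ℝ)) - X) ω := by
      intro ω
      rw [ContinuousMap.sub_apply, ContinuousMap.smul_apply, ContinuousMap.one_apply,
        smul_eq_mul, mul_one]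
      have h4 := X.norm_coe_le_norm ω
      rw [Real.norm_eq_abs] at h4
      have h5 := le_abs_self (X ω)
      linarith
    have h3 := hpos _ h2
    rw [map_sub, Ψ.map_smul, h1, smul_eq_mul, mul_one] at h3
    linarith

theorem final [TopologicalSpace.SeparableSpace Ω]
    (hf : ∀ d, 0 ≤ f d) (hS : ∀ d ω, 0 ≤ S d ω)
    (hS0 : ∀ ω, S 0 ω = 1) (hf0 : f 0 = 1)
    (hv : Viable f S) :
    ∃ Φ : C(Ω, ℝ) →ₗ[ℝ] ℝ,
      (∀ X : C(Ω, ℝ), (∀ ω, 0 ≤ X ω) → X ≠ 0 → 0 < Φ X) ∧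
      (∀ π : Fin (D + 1) → ℝ, Φ (∑ d, π d • S d) = ∑ d, π d * f d) := by
  classical
  set u := TopologicalSpace.denseSeq Ω with hu
  set bump : ℕ × ℕ → C(Ω, ℝ) := fun q =>
    ⟨fun ω => max (1 - ((q.2 : ℝ) + 1) * dist ω (u q.1)) 0,
      (continuous_const.sub (continuous_const.mul
        (continuous_id.dist continuous_const))).max continuous_const⟩ with hbump
  have hbump0 : ∀ q ω, 0 ≤ bump q ω := fun q ω => le_max_right _ _
  have hbump1 : ∀ q ω, bump q ω ≤ 1 := by
    intro q ω
    apply max_le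
    · have : 0 ≤ ((q.2 : ℝ) + 1) * dist ω (u q.1) := by positivity
      linarith
    · norm_num
  have hbumpself : ∀ q, bump q (u q.1) = 1 := by
    intro q
    show max (1 - ((q.2 : ℝ) + 1) * dist (u q.1) (u q.1)) 0 = 1
    simp
  have hbumpne : ∀ q, bump q ≠ 0 := by
    intro q hc
    have h1 := hbumpself q
    rw [hc] at h1
    simp at h1
  choose Ψ hΨpos hΨprice hΨpos' using fun q : ℕ × ℕ =>
    mainPhi hS0 hf0 hv (bump q) (hbump0 q) (hbumpne q)
  have hone : (1 : C(Ω, ℝ)) = ∑ d, (fun d => if d = 0 then (1 : ℝ) else 0) d • S d := by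
    ext ω
    have h1 := e0_pay S hS0 1 ω
    rw [Tmap_def] at h1
    rw [ContinuousMap.one_apply, h1]
  have hΨ1 : ∀ q, Ψ q 1 = 1 := by
    intro q
    rw [hone, hΨprice q]
    have h1 := e0_cost f hf0 1
    rw [Fmap_def] at h1
    exact h1
  have hΨb : ∀ q X, |Ψ q X| ≤ ‖X‖ := fun q => Psi_bound (Ψ q) (hΨpos q) (hΨ1 q)
  set E := Denumerable.eqv (ℕ × ℕ) with hE
  set w : ℕ × ℕ → ℝ := fun q => (1 / 2 : ℝ) ^ (E q + 1) with hw
  have hwpos : ∀ q, 0 < w q := fun q => by positivity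
  have hg : Summable (fun j : ℕ => (1 / 2 : ℝ) ^ (j + 1)) := by
    have h0 : Summable (fun j : ℕ => (1 / 2 : ℝ) ^ j * (1 / 2)) :=
      (summable_geometric_of_lt_one (by norm_num) (by norm_num)).mul_right _
    have h1 : (fun j : ℕ => (1 / 2 : ℝ) ^ (j + 1)) = fun j => (1 / 2 : ℝ) ^ j * (1 / 2) := by
      funext j; rw [pow_succ]
    rw [h1]; exact h0
  have hwsummable : Summable w := by
    have h1 : w = (fun j : ℕ => (1 / 2 : ℝ) ^ (j + 1)) ∘ E := rfl
    rw [h1]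
    exact hg.comp_injective E.injective
  have hwsum : ∑' q, w q = 1 := by
    have h1 : ∑' q, w q = ∑' j : ℕ, (1 / 2 : ℝ) ^ (j + 1) :=
      E.tsum_eq (fun j => (1 / 2 : ℝ) ^ (j + 1))
    rw [h1]
    have h2 : ∑' j : ℕ, (1 / 2 : ℝ) ^ (j + 1) = (∑' j : ℕ, (1 / 2 : ℝ) ^ j) * (1 / 2) := by
      rw [← tsum_mul_right]
      exact tsum_congr fun j => pow_succ _ _
    rw [h2, tsum_geometric_two]
    norm_num
  have hsum : ∀ X : C(Ω, ℝ), Summable (fun q => w q * Ψ q X) := by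
    intro X
    apply Summable.of_abs
    apply Summable.of_nonneg_of_le (fun q => abs_nonneg _) (fun q => ?_)
      (hwsummable.mul_right ‖X‖)
    rw [abs_mul, abs_of_pos (hwpos q)]
    exact mul_le_mul_of_nonneg_left (hΨb q X) (le_of_lt (hwpos q))
  set Φ : C(Ω, ℝ) →ₗ[ℝ] ℝ :=
    { toFun := fun X => ∑' q, w q * Ψ q X
      map_add' := fun X Y => by
        show (∑' q, w q * Ψ q (X + Y)) = (∑' q, w q * Ψ q X) + ∑' q, w q * Ψ q Y
        have h1 : (fun q => w q * Ψ q (X + Y)) = fun q => w q * Ψ q X + w q * Ψ q Y := by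
          funext q; rw [map_add]; ring
        rw [h1, Summable.tsum_add (hsum X) (hsum Y)]
      map_smul' := fun r X => by
        show (∑' q, w q * Ψ q (r • X)) = r * ∑' q, w q * Ψ q X
        have h1 : (fun q => w q * Ψ q (r • X)) = fun q => r * (w q * Ψ q X) := by
          funext q; rw [(Ψ q).map_smul, smul_eq_mul]; ring
        rw [h1, tsum_mul_left] } with hΦ
  have hΦapp : ∀ X, Φ X = ∑' q, w q * Ψ q X := fun X => rfl
  refine ⟨Φ, ?_, ?_⟩
  · intro X hX0 hXne
    have hex : ∃ ω, 0 < X ω := by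
      by_contra hc
      push_neg at hc
      exact hXne (ContinuousMap.ext fun ω => le_antisymm (hc ω) (hX0 ω))
    obtain ⟨ω₀, hω₀⟩ := hex
    set δ := X ω₀ / 2 with hδ
    have hδpos : 0 < δ := by positivity
    obtain ⟨s, hs, hball⟩ := Metric.continuousAt_iff.1 ((map_continuous X).continuousAt) δ hδpos
    obtain ⟨k, hk⟩ := (TopologicalSpace.denseRange_denseSeq Ω).exists_dist_lt ω₀ (half_pos hs)
    obtain ⟨n, hn⟩ := exists_nat_one_div_lt (half_pos hs)
    have hptw : ∀ ω, δ * bump (k, n) ω ≤ X ω := by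
      intro ω
      by_cases hzero : bump (k, n) ω = 0
      · rw [hzero, mul_zero]; exact hX0 ω
      · have hd : dist ω (u k) < 1 / ((n : ℝ) + 1) := by
          by_contra hdc
          push_neg at hdc
          apply hzero
          show max (1 - ((n : ℝ) + 1) * dist ω (u k)) 0 = 0
          apply max_eq_right
          have h6 : (1 : ℝ) ≤ ((n : ℝ) + 1) * dist ω (u k) := by
            calc (1 : ℝ) = ((n : ℝ) + 1) * (1 / ((n : ℝ) + 1)) := by field_simp
              _ ≤ ((n : ℝ) + 1) * dist ω (u k) :=
                  mul_le_mul_of_nonneg_left hdc (by positivity)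
          linarith
        have hdist : dist ω ω₀ < s := by
          have h7 : dist (u k) ω₀ < s / 2 := by rw [dist_comm]; exact hk
          calc dist ω ω₀ ≤ dist ω (u k) + dist (u k) ω₀ := dist_triangle _ _ _
            _ < 1 / ((n : ℝ) + 1) + s / 2 := by linarith
            _ < s / 2 + s / 2 := by linarith
            _ = s := by ring
        have hXω : δ < X ω := by
          have h8 := hball hdist
          rw [Real.dist_eq] at h8
          have h9 := abs_lt.1 h8
          rw [hδ] at *
          linarith [h9.1]
        have h10 := hbump1 (k, n) ω
        nlinarith [hbump0 (k, n) ω]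
    have hΦpos : ∀ Y : C(Ω, ℝ), (∀ ω, 0 ≤ Y ω) → 0 ≤ Φ Y := by
      intro Y hY
      rw [hΦapp]
      exact tsum_nonneg fun q => mul_nonneg (le_of_lt (hwpos q)) (hΨpos q Y hY)
    have h1 : 0 ≤ Φ (X - δ • bump (k, n)) := by
      apply hΦpos
      intro ω
      rw [ContinuousMap.sub_apply, ContinuousMap.smul_apply, smul_eq_mul, sub_nonneg]
      exact hptw ω
    rw [Φ.map_sub, Φ.map_smul, smul_eq_mul, sub_nonneg] at h1
    have h2 : w (k, n) * Ψ (k, n) (bump (k, n)) ≤ Φ (bump (k, n)) := by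
      rw [hΦapp]
      exact Summable.le_tsum (hsum _) (k, n)
        (fun q _ => mul_nonneg (le_of_lt (hwpos q)) (hΨpos q _ (hbump0 (k, n))))
    have h3 : 0 < Φ (bump (k, n)) :=
      lt_of_lt_of_le (mul_pos (hwpos _) (hΨpos' (k, n))) h2
    calc (0 : ℝ) < δ * Φ (bump (k, n)) := by positivity
      _ ≤ Φ X := h1
  · intro π
    rw [hΦapp]
    have h1 : (fun q => w q * Ψ q (∑ d, π d • S d)) = fun q => w q * (∑ d, π d * f d) := by
      funext q
      rw [hΨprice q π]
    rw [h1, tsum_mul_right, hwsum, one_mul]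

end Work

/-- a viable market admits a strictly positive linear extension of the price
functional to all of `C(Ω, ℝ)`. -/
theorem viable_implies_strictly_positive_extension
    [MetricSpace Ω] [Nonempty Ω] [CompactSpace Ω] [TopologicalSpace.SeparableSpace Ω]
    [CompleteSpace Ω] [MeasurableSpace Ω] [BorelSpace Ω] {D : ℕ} (f : Fin (D + 1) → ℝ) (S : Fin (D + 1) → C(Ω, ℝ))
    (hf : ∀ d, 0 ≤ f d) (hS : ∀ d ω, 0 ≤ S d ω)
    (hS0 : ∀ ω, S 0 ω = 1) (hf0 : f 0 = 1)
    (hv : Viable f S) :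
    ∃ Φ : C(Ω, ℝ) →ₗ[ℝ] ℝ,
      (∀ X : C(Ω, ℝ), (∀ ω, 0 ≤ X ω) → X ≠ 0 → 0 < Φ X) ∧
      (∀ π : Fin (D + 1) → ℝ, Φ (∑ d, π d • S d) = ∑ d, π d * f d) := by
  exact final hf hS hS0 hf0 hv
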